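/- Let a > 0, λ < 0, n ≥ 1, and let y₂ solve y₂' = -a - λ e^{-2y₂/n} with y₂(0) = c₀, where c₂ := λ e^{-2c₀/n} / (a + λ e^{-2c₀/n}) satisfies c₂ > 1 (so that the denominator below is positive for t ≥ 0). Then y₂(t) = -(n/2)·ln( (-a/λ)·c₂ e^{2at/n} / (c₂ e^{2at/n} - 1) ), and y₂ is bounded on [0,∞). -/

import Mathlib

open Real Set

set_option maxHeartbeats 1000000

/-- The ODE `y₂' = -a - λ e^{-2 y₂ / n}`, `y₂(0) = c₀`, with `a > 0`, `λ < 0`, `n ≥ 1`,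
and `c₂ = λ e^{-2c₀/n}/(a + λ e^{-2c₀/n}) > 1`, has explicit solution
`y₂(t) = -(n/2) log((-a/λ) c₂ e^{2at/n} / (c₂ e^{2at/n} - 1))`, bounded on `[0,∞)`. -/
theorem stmt_1 (n a l c₀ c₂ : ℝ) (hn : 1 ≤ n) (ha : 0 < a) (hl : l < 0)
    (hc₂ : c₂ = l * Real.exp (-2 * c₀ / n) / (a + l * Real.exp (-2 * c₀ / n)))
    (hc₂gt : 1 < c₂)
    (y : ℝ → ℝ) (hy0 : y 0 = c₀)
    (hode : ∀ t ∈ Set.Ici (0 : ℝ), HasDerivAt y (-a - l * Real.exp (-2 * y t / n)) t) :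
    (∀ t ∈ Set.Ici (0 : ℝ),
      y t = -(n / 2) * Real.log ((-a / l) * (c₂ * Real.exp (2 * a * t / n)) /
        (c₂ * Real.exp (2 * a * t / n) - 1))) ∧
    ∃ K : ℝ, ∀ t ∈ Set.Ici (0 : ℝ), |y t| ≤ K := by
  have hn0 : (0:ℝ) < n := lt_of_lt_of_le one_pos hn
  have hn0' : n ≠ 0 := ne_of_gt hn0
  have hl0 : l ≠ 0 := ne_of_lt hl
  have ha0 : a ≠ 0 := ne_of_gt ha
  set E₀ : ℝ := Real.exp (-2 * c₀ / n) with hE₀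
  have hE₀pos : 0 < E₀ := Real.exp_pos _
  have hdneg : a + l * E₀ < 0 := by
    by_contra h
    push_neg at h
    rcases eq_or_lt_of_le h with h0 | hpos
    · rw [hc₂, ← h0, div_zero] at hc₂gt; linarith
    · have : c₂ < 0 := by
        rw [hc₂]
        exact div_neg_of_neg_of_pos (mul_neg_of_neg_of_pos hl hE₀pos) hpos
      linarith
  have hd0 : a + l * E₀ ≠ 0 := ne_of_lt hdneg
  have hc₂d : c₂ * (a + l * E₀) = l * E₀ := by
    rw [hc₂]; field_simp
  have hc₂pos : 0 < c₂ := lt_trans one_pos hc₂gt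
  set Q : ℝ → ℝ := fun s => Real.exp (2 * y s / n) with hQ
  have hQpos : ∀ s, 0 < Q s := fun s => Real.exp_pos _
  set b : ℝ := 2 * a / n with hb
  have hbpos : 0 < b := by positivity
  have hE₀Q0 : E₀ * Q 0 = 1 := by
    show Real.exp (-2 * c₀ / n) * Real.exp (2 * y 0 / n) = 1
    rw [hy0, ← Real.exp_add, show -2 * c₀ / n + 2 * c₀ / n = 0 by ring, Real.exp_zero]
  have hu : ∀ t ∈ Ici (0:ℝ), HasDerivAt Q (-(b * Q t) - 2 * l / n) t := by
    intro t ht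
    have h1 : HasDerivAt (fun s => 2 * y s / n)
        (2 * (-a - l * Real.exp (-2 * y t / n)) / n) t :=
      ((hode t ht).const_mul 2).div_const n
    have h2 := h1.exp
    have hx : Real.exp (-2 * y t / n) * Real.exp (2 * y t / n) = 1 := by
      rw [← Real.exp_add, show -2 * y t / n + 2 * y t / n = 0 by ring, Real.exp_zero]
    convert h2 using 1
    show -(b * Real.exp (2 * y t / n)) - 2 * l / n
      = Real.exp (2 * y t / n) * (2 * (-a - l * Real.exp (-2 * y t / n)) / n)
    rw [hb]
    linear_combination (2 * l / n) * hx
  set v : ℝ → ℝ := fun s => (Q s + l / a) * Real.exp (b * s) with hv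
  have hvderiv : ∀ t ∈ Ici (0:ℝ), HasDerivAt v 0 t := by
    intro t ht
    have h1 : HasDerivAt (fun s => Q s + l / a) (-(b * Q t) - 2 * l / n) t :=
      (hu t ht).add_const _
    have h2 : HasDerivAt (fun s => Real.exp (b * s)) (Real.exp (b * t) * b) t := by
      simpa using ((hasDerivAt_id t).const_mul b).exp
    have h3 : HasDerivAt (fun s => (Q s + l / a) * Real.exp (b * s)) _ t := h1.mul h2
    convert h3 using 1
    rw [hb]
    field_simp
    ring
  have hvconst : ∀ t ∈ Ici (0:ℝ), v t = v 0 := by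
    intro t ht
    rcases eq_or_lt_of_le (mem_Ici.mp ht) with h0 | hpos
    · rw [← h0]
    · have hcont : ContinuousOn v (Icc 0 t) := fun s hs =>
        ((hvderiv s hs.1).continuousAt).continuousWithinAt
      have := constant_of_has_deriv_right_zero hcont (fun s hs =>
        (hvderiv s hs.1).hasDerivWithinAt)
      exact this t (right_mem_Icc.mpr (le_of_lt hpos))
  have hc₂' : c₂ * (a * Q 0 + l) = l := by
    linear_combination (Q 0) * hc₂d + (l - c₂ * l) * hE₀Q0
  have main : ∀ t ∈ Ici (0:ℝ),
      y t = -(n / 2) * Real.log ((-a / l) * (c₂ * Real.exp (2 * a * t / n)) /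
        (c₂ * Real.exp (2 * a * t / n) - 1)) := by
    intro t ht
    have ht0 : (0:ℝ) ≤ t := ht
    set X : ℝ := Real.exp (2 * a * t / n) with hX
    have hXb : Real.exp (b * t) = X := by rw [hb, hX]; ring_nf
    have hX1 : 1 ≤ X := Real.one_le_exp (by positivity)
    have hXpos : 0 < X := lt_of_lt_of_le one_pos hX1
    have hden : 0 < c₂ * X - 1 := by nlinarith
    have hdne : c₂ * X - 1 ≠ 0 := ne_of_gt hden
    have heq : (Q t + l / a) * X = Q 0 + l / a := by
      have h := hvconst t ht
      rw [hv] at h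
      simp only at h
      rw [hXb] at h
      simpa [mul_zero, Real.exp_zero] using h
    have hal : a * (l / a) = l := mul_div_cancel₀ l ha0
    have heq' : (a * Q t + l) * X = a * Q 0 + l := by
      linear_combination a * heq + (1 - X) * hal
    have key : Q t * (-a * (c₂ * X)) = l * (c₂ * X - 1) := by
      linear_combination (-c₂) * heq' - hc₂'
    have hQF : Q t * ((-a / l) * (c₂ * X) / (c₂ * X - 1)) = 1 := by
      have h5 : Q t * ((-a / l) * (c₂ * X) / (c₂ * X - 1))
          = (Q t * (-a * (c₂ * X))) / (l * (c₂ * X - 1)) := by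
        rw [mul_div_assoc, div_mul_div_comm, ← mul_div_assoc]
      rw [h5, key, div_self (mul_ne_zero hl0 hdne)]
    have hF : (-a / l) * (c₂ * X) / (c₂ * X - 1) = (Q t)⁻¹ :=
      eq_inv_of_mul_eq_one_left (by rw [mul_comm]; exact hQF)
    have hlogQ : Real.log (Q t) = 2 * y t / n := Real.log_exp _
    rw [hF, Real.log_inv, hlogQ]
    field_simp
  refine ⟨main, ?_⟩
  set m : ℝ := -a / l with hm
  have hmpos : 0 < m := div_pos_of_neg_of_neg (by linarith) hl
  set M : ℝ := m * c₂ / (c₂ - 1) with hM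
  have hMpos : 0 < M := by
    apply div_pos (mul_pos hmpos hc₂pos); linarith
  refine ⟨n / 2 * (|Real.log m| + |Real.log M|), ?_⟩
  intro t ht
  have ht0 : (0:ℝ) ≤ t := ht
  have hyt := main t ht
  set X : ℝ := Real.exp (2 * a * t / n) with hX
  have hX1 : 1 ≤ X := Real.one_le_exp (by positivity)
  have hXpos : 0 < X := lt_of_lt_of_le one_pos hX1
  have hden : 0 < c₂ * X - 1 := by nlinarith
  set F : ℝ := m * (c₂ * X) / (c₂ * X - 1) with hF
  have hFpos : 0 < F :=
    div_pos (mul_pos hmpos (mul_pos hc₂pos hXpos)) hden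
  have hFlow : m ≤ F := by
    rw [hF, le_div_iff₀ hden]
    nlinarith
  have hFhigh : F ≤ M := by
    rw [hF, hM, div_le_div_iff₀ hden (by linarith : (0:ℝ) < c₂ - 1)]
    nlinarith [mul_nonneg (le_of_lt (mul_pos hmpos hc₂pos)) (sub_nonneg.mpr hX1)]
  have hlog1 : Real.log m ≤ Real.log F := Real.log_le_log hmpos hFlow
  have hlog2 : Real.log F ≤ Real.log M := Real.log_le_log hFpos hFhigh
  have habs : |Real.log F| ≤ |Real.log m| + |Real.log M| := by
    rw [abs_le]
    constructor
    · have h1 := neg_abs_le (Real.log m)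
      nlinarith [abs_nonneg (Real.log M)]
    · have h1 := le_abs_self (Real.log M)
      nlinarith [abs_nonneg (Real.log m)]
  rw [hyt, abs_mul, abs_neg, abs_of_nonneg (show (0:ℝ) ≤ n / 2 by positivity)]
  exact mul_le_mul_of_nonneg_left habs (by positivity)
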